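/- Let 𝒢=(G,w) be a positive-weighted graph whose vertex set contains the distinct vertices 1,2,3,4, with all four vertices in a common connected component. For i ∈ [4] write D_{î} = D_{[4]∖{i}}(𝒢). Then for all distinct i, j, k ∈ [4] one has the strict inequality D_{î} < D_{k̂} + D_{ĵ}. -/

import Mathlib

open SimpleGraph Finset

noncomputable def subgraphWeight {V : Type} [Fintype V] {G : SimpleGraph V}
    (w : Sym2 V → ℝ) (R : G.Subgraph) : ℝ :=
  ∑ e ∈ (Set.toFinite R.edgeSet).toFinset, w e

noncomputable def graphDist {V : Type} [Fintype V] (G : SimpleGraph V)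
    (w : Sym2 V → ℝ) (I : Set V) : ℝ :=
  sInf { x : ℝ | ∃ R : G.Subgraph, R.Connected ∧ I ⊆ R.verts ∧ subgraphWeight w R = x }

def PosWeighted {V : Type} (G : SimpleGraph V) (w : Sym2 V → ℝ) : Prop :=
  ∀ e ∈ G.edgeSet, 0 < w e

section Aux
variable {V : Type} [Fintype V] {G : SimpleGraph V} {w : Sym2 V → ℝ}

lemma mySubgraphFinite (G : SimpleGraph V) : Finite G.Subgraph := by
  have hinj : Function.Injective (fun R : G.Subgraph => (R.verts, R.Adj)) := by
    intro R S h
    rw [Prod.mk.injEq] at h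
    exact SimpleGraph.Subgraph.ext h.1 h.2
  exact Finite.of_injective _ hinj

lemma subgraphWeight_nonneg (hw : PosWeighted G w) (R : G.Subgraph) :
    0 ≤ subgraphWeight w R := by
  apply Finset.sum_nonneg
  intro e he
  rw [Set.Finite.mem_toFinset] at he
  exact (hw e (R.edgeSet_subset he)).le

lemma subgraphWeight_sup_le (hw : PosWeighted G w) (H K : G.Subgraph) :
    subgraphWeight w (H ⊔ K) ≤ subgraphWeight w H + subgraphWeight w K := by
  classical
  unfold subgraphWeight
  set s := (Set.toFinite H.edgeSet).toFinset
  set t := (Set.toFinite K.edgeSet).toFinset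
  have hsub : (Set.toFinite (H ⊔ K).edgeSet).toFinset ⊆ s ∪ t := by
    intro e he
    simp only [s, t, Set.Finite.mem_toFinset, Finset.mem_union] at he ⊢
    rwa [SimpleGraph.Subgraph.edgeSet_sup] at he
  have h1 : ∑ e ∈ (Set.toFinite (H ⊔ K).edgeSet).toFinset, w e ≤ ∑ e ∈ s ∪ t, w e := by
    apply Finset.sum_le_sum_of_subset_of_nonneg hsub
    intro e he _
    rw [Finset.mem_union] at he
    rcases he with he | he <;> rw [Set.Finite.mem_toFinset] at he
    · exact (hw e (H.edgeSet_subset he)).le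
    · exact (hw e (K.edgeSet_subset he)).le
  have h2 : ∑ e ∈ s ∪ t, w e + ∑ e ∈ s ∩ t, w e = ∑ e ∈ s, w e + ∑ e ∈ t, w e :=
    Finset.sum_union_inter
  have h3 : 0 ≤ ∑ e ∈ s ∩ t, w e := by
    apply Finset.sum_nonneg
    intro e he
    rw [Finset.mem_inter] at he
    rw [Set.Finite.mem_toFinset] at he
    exact (hw e (H.edgeSet_subset he.1)).le
  linarith

lemma subgraphWeight_walk_lt (hw : PosWeighted G w) {u v : V} (q : G.Walk u v)
    (R : G.Subgraph) (hsub : ∀ e ∈ q.edges, e ∈ R.edgeSet)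
    (e₁ : Sym2 V) (he₁ : e₁ ∈ R.edgeSet) (hne : e₁ ∉ q.edges) :
    subgraphWeight w q.toSubgraph < subgraphWeight w R := by
  classical
  unfold subgraphWeight
  set s := (Set.toFinite q.toSubgraph.edgeSet).toFinset
  set t := (Set.toFinite R.edgeSet).toFinset
  have hmem : ∀ e, e ∈ s ↔ e ∈ q.edges := by
    intro e
    simp only [s, Set.Finite.mem_toFinset, SimpleGraph.Walk.edgeSet_toSubgraph, Set.mem_setOf_eq]
    exact Iff.rfl
  have hst : s ⊆ t.erase e₁ := by
    intro e he
    rw [hmem] at he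
    rw [Finset.mem_erase]
    refine ⟨fun h => hne (h ▸ he), ?_⟩
    simpa only [t, Set.Finite.mem_toFinset] using hsub e he
  have h1 : ∑ e ∈ s, w e ≤ ∑ e ∈ t.erase e₁, w e := by
    apply Finset.sum_le_sum_of_subset_of_nonneg hst
    intro e he _
    rw [Finset.mem_erase, Set.Finite.mem_toFinset] at he
    exact (hw e (R.edgeSet_subset he.2)).le
  have he₁t : e₁ ∈ t := by simpa only [t, Set.Finite.mem_toFinset] using he₁
  have h2 : w e₁ + ∑ e ∈ t.erase e₁, w e = ∑ e ∈ t, w e := Finset.add_sum_erase t w he₁t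
  have h3 : 0 < w e₁ := hw e₁ (R.edgeSet_subset he₁)
  linarith

omit [Fintype V] in
lemma walk_exists_edge {u v : V} (p : G.Walk u v) (h : u ≠ v) : ∃ e, e ∈ p.edges := by
  cases p with
  | nil => exact absurd rfl h
  | cons h' p' => exact ⟨_, List.mem_cons_self⟩

omit [Fintype V] in
lemma subgraph_exists_adj {R : G.Subgraph} (hR : R.Connected) {u v : V}
    (hu : u ∈ R.verts) (hv : v ∈ R.verts) (huv : u ≠ v) : ∃ x, R.Adj u x := by
  obtain ⟨p⟩ := hR ⟨u, hu⟩ ⟨v, hv⟩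
  have hne : (⟨u, hu⟩ : R.verts) ≠ ⟨v, hv⟩ := by
    simp only [ne_eq, Subtype.mk.injEq]; exact huv
  cases p with
  | nil => exact absurd rfl hne
  | cons h' p' => exact ⟨_, h'⟩

omit [Fintype V] in
lemma walk_map_edges_mem {R : G.Subgraph} {a b : R.verts} (p : R.coe.Walk a b) :
    ∀ e ∈ (p.map R.hom).edges, e ∈ R.edgeSet := by
  intro e he
  rw [SimpleGraph.Walk.edges_map, List.mem_map] at he
  obtain ⟨e', he', rfl⟩ := he
  induction e' with
  | h x y =>
    have : R.coe.Adj x y := SimpleGraph.Walk.adj_of_mem_edges p he'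
    simpa only [SimpleGraph.Subgraph.coe_hom, Sym2.map_pair_eq,
      SimpleGraph.Subgraph.mem_edgeSet] using (show R.Adj x y from this)

end Aux

/-- Theorem 4.4, necessity (ii): for four distinct vertices `1,2,3,4` in a common
connected component of a positive-weighted graph, `D_î < D_k̂ + D_ĵ`. -/
theorem four_vertices_strict_triangle {V : Type} [Fintype V]
    (G : SimpleGraph V) (w : Sym2 V → ℝ) (hw : PosWeighted G w)
    (ι : Fin 4 → V) (hι : Function.Injective ι)
    (hconn : ∀ i j : Fin 4, G.Reachable (ι i) (ι j)) :
    ∀ i j k : Fin 4, i ≠ j → i ≠ k → j ≠ k →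
      graphDist G w (ι '' {m | m ≠ i}) <
        graphDist G w (ι '' {m | m ≠ k}) + graphDist G w (ι '' {m | m ≠ j}) := by
  classical
  intro i j k hij hik hjk
  obtain ⟨l, hli, hlj, hlk⟩ :=
    (by decide : ∀ i j k : Fin 4, i ≠ j → i ≠ k → j ≠ k →
      ∃ l : Fin 4, l ≠ i ∧ l ≠ j ∧ l ≠ k) i j k hij hik hjk
  have hm4 : ∀ m : Fin 4, m ≠ i → m = j ∨ m = k ∨ m = l := fun m hm =>
    (by decide : ∀ i j k l m : Fin 4, i ≠ j → i ≠ k → j ≠ k → l ≠ i → l ≠ j → l ≠ k →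
      m ≠ i → m = j ∨ m = k ∨ m = l) i j k l m hij hik hjk hli hlj hlk hm
  -- a connected subgraph containing all four vertices
  have hT : ∃ T : G.Subgraph, T.Connected ∧ ∀ m : Fin 4, ι m ∈ T.verts := by
    obtain ⟨p1⟩ := hconn 0 1
    obtain ⟨p2⟩ := hconn 0 2
    obtain ⟨p3⟩ := hconn 0 3
    refine ⟨p1.toSubgraph ⊔ p2.toSubgraph ⊔ p3.toSubgraph, ?_, ?_⟩
    · apply SimpleGraph.Subgraph.connected_sup
      · refine (SimpleGraph.Subgraph.connected_sup p1.toSubgraph_connected.preconnected p2.toSubgraph_connected.preconnected ?_).preconnected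
        exact ⟨ι 0, by
          rw [SimpleGraph.Subgraph.verts_inf]
          exact ⟨p1.start_mem_verts_toSubgraph, p2.start_mem_verts_toSubgraph⟩⟩
      · exact p3.toSubgraph_connected.preconnected
      · exact ⟨ι 0, by
          rw [SimpleGraph.Subgraph.verts_inf]
          refine ⟨?_, p3.start_mem_verts_toSubgraph⟩
          rw [SimpleGraph.Subgraph.verts_sup]
          exact Or.inl p1.start_mem_verts_toSubgraph⟩
    · intro m
      simp only [SimpleGraph.Subgraph.verts_sup, Set.mem_union]
      fin_cases m
      · exact Or.inl (Or.inl p1.start_mem_verts_toSubgraph)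
      · exact Or.inl (Or.inl p1.end_mem_verts_toSubgraph)
      · exact Or.inl (Or.inr p2.end_mem_verts_toSubgraph)
      · exact Or.inr p3.end_mem_verts_toSubgraph
  obtain ⟨T, hTc, hTm⟩ := hT
  set S : Fin 4 → Set ℝ := fun a =>
    {x : ℝ | ∃ R : G.Subgraph, R.Connected ∧ (ι '' {m | m ≠ a}) ⊆ R.verts ∧
      subgraphWeight w R = x} with hSdef
  have hgd : ∀ a : Fin 4, graphDist G w (ι '' {m | m ≠ a}) = sInf (S a) := fun a => rfl
  have hbdd : ∀ a : Fin 4, BddBelow (S a) := by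
    intro a
    refine ⟨0, ?_⟩
    rintro x ⟨R, -, -, rfl⟩
    exact subgraphWeight_nonneg hw R
  have hne : ∀ a : Fin 4, (S a).Nonempty := by
    intro a
    exact ⟨_, T, hTc, by rintro x ⟨m, -, rfl⟩; exact hTm m, rfl⟩
  have hfin : ∀ a : Fin 4, (S a).Finite := by
    intro a
    have : Finite G.Subgraph := mySubgraphFinite G
    apply Set.Finite.subset (Set.finite_range (fun R : G.Subgraph => subgraphWeight w R))
    rintro x ⟨R, -, -, rfl⟩
    exact ⟨R, rfl⟩
  obtain ⟨Rk, hRkc, hRkv, hRkw⟩ := (hne k).csInf_mem (hfin k)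
  obtain ⟨Rj, hRjc, hRjv, hRjw⟩ := (hne j).csInf_mem (hfin j)
  -- vertices in Rk / Rj
  have hiRk : ι i ∈ Rk.verts := hRkv ⟨i, hik, rfl⟩
  have hjRk : ι j ∈ Rk.verts := hRkv ⟨j, hjk, rfl⟩
  have hlRk : ι l ∈ Rk.verts := hRkv ⟨l, hlk, rfl⟩
  have hiRj : ι i ∈ Rj.verts := hRjv ⟨i, hij, rfl⟩
  have hlRj : ι l ∈ Rj.verts := hRjv ⟨l, hlj, rfl⟩
  have hkRj : ι k ∈ Rj.verts := hRjv ⟨k, Ne.symm hjk, rfl⟩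
  -- a path from ι l to ι k inside Rj
  obtain ⟨p0⟩ := hRjc ⟨ι l, hlRj⟩ ⟨ι k, hkRj⟩
  set q : G.Walk (ι l) (ι k) := (p0.map Rj.hom).bypass with hqdef
  have hqe : ∀ e ∈ q.edges, e ∈ Rj.edgeSet := fun e he =>
    walk_map_edges_mem p0 e ((p0.map Rj.hom).edges_bypass_subset he)
  -- key construction
  have key : ∃ (s : V) (q' : G.Walk s (ι k)), s ∈ Rk.verts ∧
      (∀ e ∈ q'.edges, e ∈ Rj.edgeSet) ∧ ∃ e₁ ∈ Rj.edgeSet, e₁ ∉ q'.edges := by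
    by_cases hms : ι i ∈ q.support
    · refine ⟨ι i, q.dropUntil _ hms, hiRk, ?_, ?_⟩
      · intro e he
        exact hqe e (q.edges_dropUntil_subset hms he)
      · obtain ⟨e₁, he₁⟩ := walk_exists_edge (q.takeUntil _ hms) (fun h => hli (hι h))
        refine ⟨e₁, hqe e₁ (q.edges_takeUntil_subset hms he₁), ?_⟩
        have hnd : q.edges.Nodup := (p0.map Rj.hom).bypass_isPath.isTrail.edges_nodup
        have hsplit : q.edges = (q.takeUntil _ hms).edges ++ (q.dropUntil _ hms).edges := by
          rw [← SimpleGraph.Walk.edges_append, SimpleGraph.Walk.take_spec]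
        rw [hsplit, List.nodup_append] at hnd
        exact fun h => hnd.2.2 _ he₁ _ h rfl
    · refine ⟨ι l, q, hlRk, hqe, ?_⟩
      obtain ⟨x, hx⟩ := subgraph_exists_adj hRjc hiRj hkRj (fun h => hik (hι h))
      refine ⟨s(ι i, x), SimpleGraph.Subgraph.mem_edgeSet.2 hx, ?_⟩
      intro h
      exact hms (q.fst_mem_support_of_mem_edges h)
  obtain ⟨s, q', hsv, hq'e, e₁, he₁, hne₁⟩ := key
  set R := Rk ⊔ q'.toSubgraph with hRdef
  have hRc : R.Connected := by
    apply SimpleGraph.Subgraph.connected_sup hRkc.preconnected q'.toSubgraph_connected.preconnected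
    exact ⟨s, by
      rw [SimpleGraph.Subgraph.verts_inf]
      exact ⟨hsv, q'.start_mem_verts_toSubgraph⟩⟩
  have hRv : (ι '' {m | m ≠ i}) ⊆ R.verts := by
    rintro x ⟨m, hm, rfl⟩
    rw [hRdef, SimpleGraph.Subgraph.verts_sup]
    rcases hm4 m hm with rfl | rfl | rfl
    · exact Or.inl hjRk
    · exact Or.inr q'.end_mem_verts_toSubgraph
    · exact Or.inl hlRk
  have h1 : sInf (S i) ≤ subgraphWeight w R := csInf_le (hbdd i) ⟨R, hRc, hRv, rfl⟩
  have h2 : subgraphWeight w R ≤ subgraphWeight w Rk + subgraphWeight w q'.toSubgraph :=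
    subgraphWeight_sup_le hw _ _
  have h3 : subgraphWeight w q'.toSubgraph < subgraphWeight w Rj :=
    subgraphWeight_walk_lt hw q' Rj hq'e e₁ he₁ hne₁
  rw [hgd i, hgd j, hgd k, ← hRkw, ← hRjw]
  linarith
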